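/- Let A be a finite-dimensional symmetric cellular algebra over a field K. Then A is semisimple if and only if the set {C^λ_{S,T} D^λ_{T,T} | λ ∈ Λ, S, T ∈ M(λ)} is a K-basis of A. -/

import Mathlib

open Module

/-- Matrix rings over a field are semisimple. -/
lemma aux_matrix_isSemisimpleRing (K : Type*) [Field K] (n : Type*) [Fintype n]
    [DecidableEq n] : IsSemisimpleRing (Matrix n n K) := by
  classical
  let col : n → Submodule (Matrix n n K) (Matrix n n K) := fun j =>
    { carrier := {X | ∀ i k, k ≠ j → X i k = 0}
      add_mem' := fun {X Y} hX hY i k hk => by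
        simp [Matrix.add_apply, hX i k hk, hY i k hk]
      zero_mem' := fun i k hk => rfl
      smul_mem' := fun B {X} hX i k hk => by
        show (B * X) i k = 0
        rw [Matrix.mul_apply]
        exact Finset.sum_eq_zero fun m _ => by rw [hX m k hk, mul_zero] }
  have hsup : (⨆ j, col j) = ⊤ := by
    rw [eq_top_iff]
    rintro X -
    have hX : X = ∑ j, (Matrix.of fun i k => if k = j then X i k else 0 : Matrix n n K) := by
      ext i k
      rw [Matrix.sum_apply]
      simp [Finset.sum_ite_eq]
    rw [hX]
    refine Submodule.sum_mem _ fun j _ => Submodule.mem_iSup_of_mem j ?_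
    intro i k hk
    simp [hk]
  have hsimple : ∀ j, IsSimpleModule (Matrix n n K) (col j) := by
    intro j
    have hEmem : Matrix.single j j (1 : K) ∈ col j := by
      intro i k hk
      simp [Matrix.single]
      intro _ h
      exact absurd h.symm hk
    haveI : Nontrivial (Submodule (Matrix n n K) (col j)) := by
      refine nontrivial_of_ne ⊥ ⊤ fun h => ?_
      have hmem : (⟨_, hEmem⟩ : col j) ∈ (⊤ : Submodule (Matrix n n K) (col j)) :=
        Submodule.mem_top
      rw [← h, Submodule.mem_bot] at hmem
      have h11 : Matrix.single j j (1 : K) = 0 := congrArg Subtype.val hmem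
      have h12 := congrFun (congrFun h11 j) j
      simp [Matrix.single] at h12
    refine IsSimpleModule.mk (toIsSimpleOrder := @IsSimpleOrder.mk _ _ _ this ?_)
    intro p
    rcases eq_or_ne p ⊥ with h | h
    · exact Or.inl h
    · refine Or.inr (eq_top_iff.mpr ?_)
      obtain ⟨x, hxp, hx0⟩ := Submodule.exists_mem_ne_zero_of_ne_bot h
      have hX0 : (x : Matrix n n K) ≠ 0 := fun h0 => hx0 (Subtype.ext h0)
      obtain ⟨i₀, k₀, hik⟩ : ∃ i k, (x : Matrix n n K) i k ≠ 0 := by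
        by_contra hc
        push_neg at hc
        exact hX0 (by ext i k; simpa using hc i k)
      have hk₀ : k₀ = j := by
        by_contra hkj
        exact hik (x.2 i₀ k₀ hkj)
      rw [hk₀] at hik
      rintro ⟨Y, hY⟩ -
      set c : K := ((x : Matrix n n K) i₀ j)⁻¹ with hc
      set B : Matrix n n K := c • (Y * Matrix.single j i₀ (1 : K)) with hB
      have hBx : B • x = (⟨Y, hY⟩ : col j) := by
        apply Subtype.ext
        have hco : ((B • x : col j) : Matrix n n K) = B * (x : Matrix n n K) := rfl
        rw [hco]
        show B * (x : Matrix n n K) = Y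
        ext i k
        have hYEX : (Y * (Matrix.single j i₀ (1 : K) * (x : Matrix n n K))) i k
            = Y i j * (x : Matrix n n K) i₀ k := by
          rw [Matrix.mul_apply]
          have hEX : ∀ a, (Matrix.single j i₀ (1 : K) * (x : Matrix n n K)) a k
              = if j = a then (x : Matrix n n K) i₀ k else 0 := by
            intro a
            rw [Matrix.mul_apply]
            simp [Matrix.single, ite_and, Finset.sum_ite_eq]
          simp only [hEX, mul_ite, mul_zero]
          rw [Finset.sum_ite_eq Finset.univ j fun a => Y i a * (x : Matrix n n K) i₀ k]
          simp
        rw [hB, smul_mul_assoc, mul_assoc, Matrix.smul_apply, hYEX, smul_eq_mul]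
        rcases eq_or_ne k j with rfl | hkj
        · rw [hc, mul_comm (Y i k)]
          rw [← mul_assoc, inv_mul_cancel₀ hik, one_mul]
        · rw [x.2 i₀ k hkj, mul_zero, mul_zero]
          exact (hY i k hkj).symm
      rw [← hBx]
      exact Submodule.smul_mem p B hxp
  have hss : ∀ j, IsSemisimpleModule (Matrix n n K) (col j) := fun j => by
    haveI := hsimple j
    infer_instance
  exact isSemisimpleModule_of_isSemisimpleModule_submodule' hss hsup

/-- In a semisimple ring, a left ideal (viewed as an `R`-submodule closed under left
multiplication) consisting of elements multiplying to zero is trivial. -/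
lemma aux_sq_zero_eq_bot {R A : Type*} [Field R] [Ring A] [Algebra R A]
    [IsSemisimpleRing A] (L : Submodule R A)
    (hleft : ∀ (a : A), ∀ x ∈ L, a * x ∈ L)
    (hsq : ∀ x ∈ L, ∀ y ∈ L, x * y = 0) : L = ⊥ := by
  let L' : Submodule A A :=
    { carrier := (L : Set A)
      add_mem' := fun hx hy => L.add_mem hx hy
      zero_mem' := L.zero_mem
      smul_mem' := fun a x hx => by
        simpa [smul_eq_mul] using hleft a x hx }
  obtain ⟨W, hW⟩ := exists_isCompl L'
  have h1top : (1 : A) ∈ L' ⊔ W := by rw [hW.sup_eq_top]; exact Submodule.mem_top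
  obtain ⟨e, he, w, hw, hew⟩ := Submodule.mem_sup.mp h1top
  rw [eq_bot_iff]
  intro x hx
  have hxL' : x ∈ L' := hx
  have h1 : x = x * e + x * w := by rw [← mul_add, hew, mul_one]
  have hxe : x * e = 0 := hsq x hx e he
  have hxw : x * w ∈ W := by simpa [smul_eq_mul] using W.smul_mem x hw
  have hxW : x ∈ W := by rw [h1, hxe, zero_add]; exact hxw
  have : x ∈ L' ⊓ W := ⟨hxL', hxW⟩
  rw [hW.inf_eq_bot] at this
  exact (Submodule.mem_bot R).mpr ((Submodule.mem_bot A).mp this)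

/-- Corollary 5.1(1)⟺(3): a finite-dimensional symmetric cellular algebra over a field
is semisimple iff `{C l S T * D l T T}` is a basis of `A`. -/
theorem semisimple_iff_CD_basis
    {R A : Type*} [Field R] [Ring A] [Algebra R A]
    {Λ : Type*} [PartialOrder Λ] [Fintype Λ] [DecidableEq Λ]
    {M : Λ → Type*} [∀ l, Fintype (M l)] [∀ l, DecidableEq (M l)]
    (C D : ∀ l, M l → M l → A)
    (bC : Basis ((l : Λ) × (M l × M l)) R A)
    (hbC : ∀ l S T, bC ⟨l, (S, T)⟩ = C l S T)
    (ι : A →ₗ[R] A)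
    (hι2 : ∀ x, ι (ι x) = x)
    (hιmul : ∀ x y, ι (x * y) = ι y * ι x)
    (hC2 : ∀ l (S T : M l), ι (C l S T) - C l T S ∈
      Submodule.span R {x | ∃ m, ∃ U V : M m, m < l ∧ x = C m U V})
    (r : A → ∀ l, M l → M l → R)
    (hC3 : ∀ (a : A) l (S T : M l), a * C l S T - ∑ S', r a l S' S • C l S' T ∈
      Submodule.span R {x | ∃ m, ∃ U V : M m, m < l ∧ x = C m U V})
    (τ : A →ₗ[R] R)
    (hτtr : ∀ x y, τ (x * y) = τ (y * x))
    (bD : Basis ((l : Λ) × (M l × M l)) R A)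
    (hbD : ∀ l S T, bD ⟨l, (S, T)⟩ = D l S T)
    (hdual : ∀ l m (S T : M l) (U V : M m),
      τ (C l S T * D m U V) =
        if (⟨l, (S, T)⟩ : (l : Λ) × (M l × M l)) = ⟨m, (V, U)⟩ then 1 else 0)
     :
    IsSemisimpleRing A ↔
      (LinearIndependent R
          (fun t : (l : Λ) × (M l × M l) => C t.1 t.2.1 t.2.2 * D t.1 t.2.2 t.2.2) ∧
        Submodule.span R
          (Set.range fun t : (l : Λ) × (M l × M l) =>
            C t.1 t.2.1 t.2.2 * D t.1 t.2.2 t.2.2) = ⊤) := by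
  classical
  haveI : Module.Finite R A := Module.Finite.of_basis bC
  set fam : ((l : Λ) × (M l × M l)) → A := fun t => C t.1 t.2.1 t.2.2 * D t.1 t.2.2 t.2.2 with hfam
  set Nl : Λ → Submodule R A :=
    fun l => Submodule.span R {x | ∃ m, ∃ U V : M m, m < l ∧ x = C m U V} with hNl
  -- `Nl l` contains all lower cells and is a left ideal
  have hCmemN : ∀ {m l : Λ}, m < l → ∀ (U V : M m), C m U V ∈ Nl l :=
    fun hml U V => Submodule.subset_span ⟨_, U, V, hml, rfl⟩
  have hNle : ∀ {m l : Λ}, m < l → Nl m ≤ Nl l := by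
    intro m l hml
    refine Submodule.span_le.mpr ?_
    rintro x ⟨m', U, V, hm', rfl⟩
    exact hCmemN (lt_trans hm' hml) U V
  have hNleft : ∀ (l : Λ) (a : A), ∀ y ∈ Nl l, a * y ∈ Nl l := by
    intro l a y hy
    induction hy using Submodule.span_induction with
    | mem z hz =>
      obtain ⟨m, U, V, hm, rfl⟩ := hz
      have h3 := hC3 a m U V
      have hsplit : a * C m U V =
          (a * C m U V - ∑ S', r a m S' U • C m S' V) + ∑ S', r a m S' U • C m S' V := by
        abel
      rw [hsplit]
      refine Submodule.add_mem _ (hNle hm h3) (Submodule.sum_mem _ fun S' _ => ?_)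
      exact Submodule.smul_mem _ _ (hCmemN hm S' V)
    | zero => rw [mul_zero]; exact Submodule.zero_mem _
    | add u v hu hv ihu ihv => rw [mul_add]; exact Submodule.add_mem _ ihu ihv
    | smul c u hu ihu => rw [mul_smul_comm]; exact Submodule.smul_mem _ _ ihu
  -- lower cells are annihilated by τ against level-l dual elements
  have hτND : ∀ (l : Λ) (T S' : M l), ∀ y ∈ Nl l, τ (y * D l T S') = 0 := by
    intro l T S' y hy
    induction hy using Submodule.span_induction with
    | mem z hz =>
      obtain ⟨m, U, V, hm, rfl⟩ := hz
      rw [hdual m l U V T S', if_neg]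
      intro h
      exact hm.ne (congrArg Sigma.fst h)
    | zero => rw [zero_mul, map_zero]
    | add u v hu hv ihu ihv => rw [add_mul, map_add, ihu, ihv, add_zero]
    | smul c u hu ihu => rw [smul_mul_assoc, map_smul, ihu, smul_zero]
  -- the key trace formula
  have hL1 : ∀ (a : A) (l : Λ) (S T S' : M l),
      τ (a * (C l S T * D l T S')) = r a l S' S := by
    intro a l S T S'
    have h3 := hC3 a l S T
    have key : a * (C l S T * D l T S') =
        (∑ S'', r a l S'' S • C l S'' T) * D l T S'
        + (a * C l S T - ∑ S'', r a l S'' S • C l S'' T) * D l T S' := by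
      rw [← add_mul, ← mul_assoc]
      congr 1
      abel
    rw [key, map_add, hτND l T S' _ h3, add_zero, Finset.sum_mul, map_sum]
    have hterm : ∀ S'' : M l,
        τ ((r a l S'' S • C l S'' T) * D l T S') =
          r a l S'' S * (if S'' = S' then 1 else 0) := by
      intro S''
      rw [smul_mul_assoc, map_smul, smul_eq_mul, hdual l l S'' T T S']
      congr 1
      by_cases h : S'' = S'
      · subst h; simp
      · rw [if_neg, if_neg h]
        intro hcon
        apply h
        have := (Sigma.mk.inj_iff.mp hcon).2
        have h2 := congrArg Prod.fst (eq_of_heq this)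
        exact h2
    simp only [hterm, mul_ite, mul_one, mul_zero]
    rw [Finset.sum_ite_eq' Finset.univ S' fun S'' => r a l S'' S]
    simp
  -- multiplicativity of r
  have hL2 : ∀ (a b : A) (l : Λ) (S' S : M l),
      r (a * b) l S' S = ∑ S'', r a l S' S'' * r b l S'' S := by
    intro a b l S' S
    have h1 : τ ((a * b) * (C l S S * D l S S')) = r (a * b) l S' S := hL1 (a * b) l S S S'
    have h3 := hC3 b l S S
    have e1 : (a * b) * (C l S S * D l S S') = a * ((b * C l S S) * D l S S') := by
      rw [mul_assoc, ← mul_assoc b]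
    have e2 : b * C l S S =
        (∑ S'', r b l S'' S • C l S'' S) +
          (b * C l S S - ∑ S'', r b l S'' S • C l S'' S) := by abel
    have expand : (a * b) * (C l S S * D l S S') =
        (∑ S'', r b l S'' S • (a * (C l S'' S * D l S S')))
        + a * ((b * C l S S - ∑ S'', r b l S'' S • C l S'' S) * D l S S') := by
      rw [e1]
      conv_lhs => rw [e2]
      rw [add_mul, mul_add]
      congr 1
      rw [Finset.sum_mul, Finset.mul_sum]
      refine Finset.sum_congr rfl fun S'' _ => ?_
      rw [smul_mul_assoc, mul_smul_comm]
    have hn0 : τ (a * ((b * C l S S - ∑ S'', r b l S'' S • C l S'' S) * D l S S')) = 0 := by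
      rw [← mul_assoc]
      exact hτND l S S' _ (hNleft l a _ h3)
    rw [← h1, expand, map_add, hn0, add_zero, map_sum]
    refine Finset.sum_congr rfl fun S'' _ => ?_
    rw [map_smul, smul_eq_mul, hL1 a l S'' S S', mul_comm]
  -- r at 1
  have hrone : ∀ (l : Λ) (S' S : M l), r (1 : A) l S' S = if S' = S then 1 else 0 := by
    intro l S' S
    have := hL1 1 l S S S'
    rw [one_mul, hdual l l S S S S'] at this
    rw [← this]
    by_cases h : S' = S
    · subst h; simp
    · rw [if_neg, if_neg h]
      intro hcon
      apply h
      have := (Sigma.mk.inj_iff.mp hcon).2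
      exact (congrArg Prod.fst (eq_of_heq this)).symm
  -- coefficient extraction via τ
  have hrepr : ∀ (x : A) (m : Λ) (U V : M m),
      τ (x * D m U V) = bC.repr x ⟨m, (V, U)⟩ := by
    intro x m U V
    have hmap : (τ.comp (LinearMap.mulRight R (D m U V))) =
        (Finsupp.lapply (⟨m, (V, U)⟩ : (l : Λ) × (M l × M l))).comp (bC.repr : A →ₗ[R] (((l : Λ) × (M l × M l)) →₀ R)) := by
      refine bC.ext fun i => ?_
      rcases i with ⟨l, S, T⟩
      rw [LinearMap.comp_apply, LinearMap.comp_apply, LinearMap.mulRight_apply,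
        LinearEquiv.coe_coe, bC.repr_self, Finsupp.lapply_apply, Finsupp.single_apply,
        hbC, hdual l m S T U V]
    have := LinearMap.congr_fun hmap x
    simpa using this
  -- nondegeneracy of the trace form
  have hnd : ∀ x : A, (∀ y, τ (x * y) = 0) → x = 0 := by
    intro x hx
    have h0 : ∀ i : ((l : Λ) × (M l × M l)), bC.repr x i = 0 := by
      rintro ⟨m, V, U⟩
      rw [← hrepr x m U V]
      exact hx (D m U V)
    have : bC.repr x = 0 := Finsupp.ext h0
    exact bC.repr.map_eq_zero_iff.mp this
  -- the linear map Θ recording all pairings against the family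
  set Θ : A →ₗ[R] (((l : Λ) × (M l × M l)) → R) :=
    LinearMap.pi (fun t => τ.comp (LinearMap.mulRight R (fam t))) with hΘdef
  have hΘ : ∀ (x : A) (t : (l : Λ) × (M l × M l)), Θ x t = r x t.1 t.2.2 t.2.1 := by
    rintro x ⟨l, S, T⟩
    show τ (x * (C l S T * D l T T)) = r x l T S
    exact hL1 x l S T T
  have hΘfam : ∀ (x : A) (t : (l : Λ) × (M l × M l)), Θ x t = τ (x * fam t) := fun x t => rfl
  -- ker Θ = 0 implies the family spans
  have hspan_of_ker : (∀ x, Θ x = 0 → x = 0) →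
      Submodule.span R (Set.range fam) = ⊤ := by
    intro hk
    set W := Submodule.span R (Set.range fam) with hW
    let α : A →ₗ[R] (W →ₗ[R] R) :=
      { toFun := fun x => τ.comp ((LinearMap.mulLeft R x).comp W.subtype)
        map_add' := by
          intro x y
          ext w
          simp [add_mul]
        map_smul' := by
          intro c x
          ext w
          simp [smul_mul_assoc] }
    have hαinj : Function.Injective α := by
      refine (injective_iff_map_eq_zero α).mpr fun x hx => ?_
      refine hk x ?_
      funext t
      have hmem : fam t ∈ W := Submodule.subset_span (Set.mem_range_self t)
      have h := LinearMap.congr_fun hx ⟨fam t, hmem⟩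
      rw [hΘfam]
      simpa [α] using h
    have h1 : finrank R A ≤ finrank R W := by
      have h2 := LinearMap.finrank_le_finrank_of_injective hαinj
      have h3 : finrank R (Module.Dual R W) = finrank R W := Subspace.dual_finrank_eq
      exact h2.trans (le_of_eq h3)
    exact Submodule.eq_top_of_finrank_eq (le_antisymm (Submodule.finrank_le W) h1)
  -- if the family spans then ker Θ = 0
  have hker_of_span : Submodule.span R (Set.range fam) = ⊤ →
      (∀ x, Θ x = 0 → x = 0) := by
    intro hsp x hx
    refine hnd x fun y => ?_
    have hy : y ∈ Submodule.span R (Set.range fam) := by rw [hsp]; exact Submodule.mem_top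
    induction hy using Submodule.span_induction with
    | mem z hz =>
      obtain ⟨t, rfl⟩ := hz
      have := congrFun hx t
      rw [hΘfam] at this
      exact this
    | zero => rw [mul_zero, map_zero]
    | add u v hu hv ihu ihv => rw [mul_add, map_add, ihu, ihv, add_zero]
    | smul c u hu ihu => rw [mul_smul_comm, map_smul, ihu, smul_zero]
  -- ker Θ = 0 implies semisimple, via the iso with a product of matrix rings
  have key1 : (∀ x, Θ x = 0 → x = 0) → IsSemisimpleRing A := by
    intro hk
    have hradd : ∀ (a b : A) (l : Λ) (S' S : M l),
        r (a + b) l S' S = r a l S' S + r b l S' S := by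
      intro a b l S' S
      rw [← hL1 a l S S S', ← hL1 b l S S S', ← hL1 (a + b) l S S S', add_mul, map_add]
    have hrsmul : ∀ (c : R) (a : A) (l : Λ) (S' S : M l),
        r (c • a) l S' S = c * r a l S' S := by
      intro c a l S' S
      rw [← hL1 a l S S S', ← hL1 (c • a) l S S S', smul_mul_assoc, map_smul, smul_eq_mul]
    let ρ : A →ₗ[R] (∀ l, Matrix (M l) (M l) R) :=
      { toFun := fun a => fun l => Matrix.of fun S' S => r a l S' S
        map_add' := fun a b => funext fun l => Matrix.ext fun S' S => hradd a b l S' S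
        map_smul' := fun c a => funext fun l => Matrix.ext fun S' S => hrsmul c a l S' S }
    have hρinj : Function.Injective ρ := by
      refine (injective_iff_map_eq_zero ρ).mpr fun x hx => ?_
      refine hk x ?_
      funext t
      rw [hΘ]
      have := congrFun (congrFun (congrFun hx t.1) t.2.2) t.2.1
      exact this
    have hfr : finrank R A = finrank R (∀ l, Matrix (M l) (M l) R) := by
      rw [Module.finrank_eq_card_basis bC, Module.finrank_pi_fintype, Fintype.card_sigma]
      refine Finset.sum_congr rfl fun l _ => ?_
      rw [Module.finrank_matrix, finrank_self, mul_one, Fintype.card_prod]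
    have hρsurj : Function.Surjective ρ := by
      rw [← LinearMap.range_eq_top]
      apply Submodule.eq_top_of_finrank_eq
      rw [LinearMap.finrank_range_of_inj hρinj, hfr]
    let ρR : A →+* (∀ l, Matrix (M l) (M l) R) :=
      { toFun := ρ
        map_one' := funext fun l => Matrix.ext fun S' S => by
          show r (1 : A) l S' S = (1 : Matrix (M l) (M l) R) S' S
          rw [Matrix.one_apply]
          exact hrone l S' S
        map_mul' := fun a b => funext fun l => Matrix.ext fun S' S => by
          show r (a * b) l S' S = ((Matrix.of fun S' S => r a l S' S) *
            (Matrix.of fun S' S => r b l S' S) : Matrix (M l) (M l) R) S' S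
          rw [Matrix.mul_apply]
          exact hL2 a b l S' S
        map_zero' := map_zero ρ
        map_add' := fun a b => map_add ρ a b }
    have hbij : Function.Bijective ρR := ⟨hρinj, hρsurj⟩
    let e := RingEquiv.ofBijective ρR hbij
    haveI : ∀ l, IsSemisimpleRing (Matrix (M l) (M l) R) :=
      fun l => aux_matrix_isSemisimpleRing R (M l)
    haveI : IsSemisimpleRing (∀ l, Matrix (M l) (M l) R) := inferInstance
    exact (e.symm.toRingHom).isSemisimpleRing_of_surjective e.symm.surjective
  -- semisimple implies ker Θ = 0, via nilpotency of ker Θ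
  have key2 : IsSemisimpleRing A → (∀ x, Θ x = 0 → x = 0) := by
    intro hss
    let d : Λ → ℕ := fun l => (Finset.univ.filter (fun m => m < l)).card
    have hdlt : ∀ {m l : Λ}, m < l → d m < d l := by
      intro m l h
      apply Finset.card_lt_card
      rw [Finset.ssubset_iff_of_subset]
      · exact ⟨m, by simp [h], by simp⟩
      · intro a ha
        simp only [Finset.mem_filter, Finset.mem_univ, true_and] at ha ⊢
        exact lt_trans ha h
    have hdcard : ∀ l, d l < Fintype.card Λ := by
      intro l
      rw [← Finset.card_univ]
      apply Finset.card_lt_card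
      rw [Finset.ssubset_iff_of_subset (Finset.filter_subset _ _)]
      exact ⟨l, Finset.mem_univ l, by simp⟩
    set F : ℕ → Submodule R A :=
      fun k => Submodule.span R {x | ∃ m, ∃ U V : M m, d m < k ∧ x = C m U V} with hF
    have hFmono : ∀ {j k : ℕ}, j ≤ k → F j ≤ F k := by
      intro j k hjk
      apply Submodule.span_mono
      rintro x ⟨m, U, V, hm, rfl⟩
      exact ⟨m, U, V, lt_of_lt_of_le hm hjk, rfl⟩
    have hF0 : F 0 = ⊥ := by
      rw [Submodule.span_eq_bot]
      rintro x ⟨m, U, V, hm, rfl⟩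
      exact absurd hm (Nat.not_lt_zero _)
    have hNF : ∀ m : Λ, Nl m ≤ F (d m) := by
      intro m
      refine Submodule.span_le.mpr ?_
      rintro x ⟨m', U, V, hm', rfl⟩
      exact Submodule.subset_span ⟨m', U, V, hdlt hm', rfl⟩
    have hFtop : (1 : A) ∈ F (Fintype.card Λ) := by
      have hsub : Set.range (bC : ((l : Λ) × (M l × M l)) → A) ⊆
          {x | ∃ m, ∃ U V : M m, d m < Fintype.card Λ ∧ x = C m U V} := by
        rintro _ ⟨⟨l, S, T⟩, rfl⟩
        exact ⟨l, S, T, hdcard l, hbC l S T⟩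
      have h1 : (1 : A) ∈ Submodule.span R (Set.range (bC : ((l : Λ) × (M l × M l)) → A)) := by
        rw [bC.span_eq]; exact Submodule.mem_top
      exact Submodule.span_mono hsub h1
    have hJr : ∀ y, Θ y = 0 → ∀ (l : Λ) (S' S : M l), r y l S' S = 0 := by
      intro y hy l S' S
      have := congrFun hy (⟨l, (S, S')⟩ : (l : Λ) × (M l × M l))
      rw [hΘ] at this
      exact this
    have hJleft : ∀ (a : A) (y : A), Θ y = 0 → Θ (a * y) = 0 := by
      intro a y hy
      funext t
      rw [hΘ, hL2]
      exact Finset.sum_eq_zero fun S'' _ => by rw [hJr y hy t.1 S'' t.2.1, mul_zero]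
    have hJkill : ∀ (y : A), Θ y = 0 → ∀ (k : ℕ), ∀ z ∈ F (k + 1), y * z ∈ F k := by
      intro y hy k z hz
      induction hz using Submodule.span_induction with
      | mem w hw =>
        obtain ⟨m, U, V, hm, rfl⟩ := hw
        have h3 := hC3 y m U V
        have hsum0 : ∑ S', r y m S' U • C m S' V = 0 :=
          Finset.sum_eq_zero fun S' _ => by rw [hJr y hy m S' U, zero_smul]
        have : y * C m U V = y * C m U V - ∑ S', r y m S' U • C m S' V := by
          rw [hsum0, sub_zero]
        rw [this]
        exact hFmono (Nat.lt_succ_iff.mp hm) (hNF m h3)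
      | zero => rw [mul_zero]; exact Submodule.zero_mem _
      | add u v hu hv ihu ihv => rw [mul_add]; exact Submodule.add_mem _ ihu ihv
      | smul c u hu ihu => rw [mul_smul_comm]; exact Submodule.smul_mem _ _ ihu
    let J : Submodule R A := LinearMap.ker Θ
    let Q : ℕ → Submodule R A := fun k =>
      Nat.rec J (fun _ Qk => Submodule.span R {z | ∃ u ∈ Qk, ∃ v ∈ Qk, z = u * v}) k
    have hQ0 : Q 0 = J := rfl
    have hQsucc : ∀ k, Q (k + 1) =
        Submodule.span R {z | ∃ u ∈ Q k, ∃ v ∈ Q k, z = u * v} := fun _ => rfl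
    have hQJ : ∀ k, ∀ y ∈ Q k, Θ y = 0 := by
      intro k
      induction k with
      | zero => intro y hy; exact LinearMap.mem_ker.mp hy
      | succ k ih =>
        intro y hy
        rw [hQsucc] at hy
        induction hy using Submodule.span_induction with
        | mem w hw =>
          obtain ⟨u, hu, v, hv, rfl⟩ := hw
          exact hJleft u v (ih v hv)
        | zero => exact map_zero Θ
        | add u v hu hv ihu ihv => rw [map_add, ihu, ihv, add_zero]
        | smul c u hu ihu => rw [map_smul, ihu, smul_zero]
    have hQleft : ∀ (k : ℕ) (a : A), ∀ y ∈ Q k, a * y ∈ Q k := by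
      intro k
      induction k with
      | zero =>
        intro a y hy
        exact LinearMap.mem_ker.mpr (hJleft a y (LinearMap.mem_ker.mp hy))
      | succ k ih =>
        intro a y hy
        rw [hQsucc] at hy ⊢
        induction hy using Submodule.span_induction with
        | mem w hw =>
          obtain ⟨u, hu, v, hv, rfl⟩ := hw
          rw [← mul_assoc]
          exact Submodule.subset_span ⟨a * u, ih a u hu, v, hv, rfl⟩
        | zero => rw [mul_zero]; exact Submodule.zero_mem _
        | add u v hu hv ihu ihv => rw [mul_add]; exact Submodule.add_mem _ ihu ihv
        | smul c u hu ihu => rw [mul_smul_comm]; exact Submodule.smul_mem _ _ ihu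
    have hQkill : ∀ (k : ℕ), ∀ y ∈ Q k, ∀ (j : ℕ), ∀ z ∈ F j, y * z ∈ F (j - 2 ^ k) := by
      intro k
      induction k with
      | zero =>
        intro y hy j z hz
        cases j with
        | zero =>
          rw [hF0] at hz
          rw [(Submodule.mem_bot R).mp hz, mul_zero]
          exact Submodule.zero_mem _
        | succ j =>
          have := hJkill y (hQJ 0 y hy) j z hz
          simpa using this
      | succ k ih =>
        intro y hy j z hz
        rw [hQsucc] at hy
        induction hy using Submodule.span_induction with
        | mem w hw =>
          obtain ⟨u, hu, v, hv, rfl⟩ := hw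
          rw [mul_assoc]
          have h1 := ih v hv j z hz
          have h2 := ih u hu _ _ h1
          have heq : j - 2 ^ k - 2 ^ k = j - 2 ^ (k + 1) := by
            rw [Nat.sub_sub]
            congr 1
            rw [pow_succ, mul_two]
          rwa [heq] at h2
        | zero => rw [zero_mul]; exact Submodule.zero_mem _
        | add u v hu hv ihu ihv => rw [add_mul]; exact Submodule.add_mem _ ihu ihv
        | smul c u hu ihu => rw [smul_mul_assoc]; exact Submodule.smul_mem _ _ ihu
    have hQcardbot : Q (Fintype.card Λ) = ⊥ := by
      rw [eq_bot_iff]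
      intro y hy
      have h1 := hQkill (Fintype.card Λ) y hy (Fintype.card Λ) 1 hFtop
      rw [mul_one] at h1
      have h2 : Fintype.card Λ - 2 ^ Fintype.card Λ = 0 :=
        Nat.sub_eq_zero_of_le (Nat.lt_two_pow_self (n := Fintype.card Λ)).le
      rw [h2, hF0] at h1
      exact h1
    have hdown : ∀ k : ℕ, Q (k + 1) = ⊥ → Q k = ⊥ := by
      intro k hk1
      refine aux_sq_zero_eq_bot (Q k) (hQleft k) ?_
      intro u hu v hv
      have : u * v ∈ Q (k + 1) := by
        rw [hQsucc]
        exact Submodule.subset_span ⟨u, hu, v, hv, rfl⟩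
      rw [hk1] at this
      exact (Submodule.mem_bot R).mp this
    have hQfinal : Q 0 = ⊥ := by
      have hstep : ∀ i : ℕ, Q (Fintype.card Λ - i) = ⊥ := by
        intro i
        induction i with
        | zero => simpa using hQcardbot
        | succ i ih =>
          rcases Nat.lt_or_ge i (Fintype.card Λ) with h | h
          · have heq : Fintype.card Λ - i = (Fintype.card Λ - (i + 1)) + 1 := by omega
            rw [heq] at ih
            exact hdown _ ih
          · have heq : Fintype.card Λ - (i + 1) = Fintype.card Λ - i := by omega
            rw [heq]
            exact ih
      simpa using hstep (Fintype.card Λ)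
    intro x hx
    have : x ∈ Q 0 := LinearMap.mem_ker.mpr hx
    rw [hQfinal] at this
    exact (Submodule.mem_bot R).mp this
  -- assemble
  constructor
  · intro hss
    have hk := key2 hss
    have hsp := hspan_of_ker hk
    refine ⟨?_, hsp⟩
    refine linearIndependent_of_top_le_span_of_card_eq_finrank ?_ ?_
    · rw [hsp]
    · exact (Module.finrank_eq_card_basis bC).symm
  · rintro ⟨-, hsp⟩
    exact key1 (hker_of_span hsp)
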